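/- For every natural number k, the characteristic polynomial of the dimer hopping matrix H_k equals ∏_{m=0}^{k} (X − (2m − k)); in particular the eigenvalues of H_k are exactly −k, −k+2, −k+4, …, k−2, k. -/

import Mathlib

open Matrix

/-- The dimer hopping matrix `H_k` restricted to the `k`-particle subspace:
a `(k+1) × (k+1)` symmetric tridiagonal matrix with off-diagonal entries
`√((α+1)(k−α))`. -/
noncomputable def hopH (k : ℕ) : Matrix (Fin (k+1)) (Fin (k+1)) ℝ :=
  fun α β =>
    if (α : ℕ) + 1 = (β : ℕ) then Real.sqrt ((((α : ℕ) + 1) * (k - (α : ℕ)) : ℕ))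
    else if (β : ℕ) + 1 = (α : ℕ) then Real.sqrt ((((β : ℕ) + 1) * (k - (β : ℕ)) : ℕ))
    else 0

open Polynomial

lemma dA (m : ℕ) : (1 + X) * derivative ((1 + X : ℝ[X])^m) = C (m:ℝ) * (1 + X)^m := by
  cases m with
  | zero => simp
  | succ n =>
    rw [derivative_pow]
    simp only [derivative_add, derivative_one, derivative_X, zero_add, mul_one,
      Nat.add_sub_cancel]
    rw [pow_succ]; ring

lemma dB (n : ℕ) : (1 - X) * derivative ((1 - X : ℝ[X])^n) = C (-(n:ℝ)) * (1 - X)^n := by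
  cases n with
  | zero => simp
  | succ n =>
    rw [derivative_pow]
    simp only [derivative_sub, derivative_one, derivative_X, zero_sub, Nat.add_sub_cancel]
    rw [map_neg, pow_succ]; ring

noncomputable def pp (k m : ℕ) : ℝ[X] := (1 + X)^m * (1 - X)^(k - m)

lemma eig_poly (k m : ℕ) (hm : m ≤ k) :
    (1 - X^2) * derivative (pp k m) + C (k:ℝ) * (X * pp k m)
      = C (2*(m:ℝ) - k) * pp k m := by
  have h1 : (1 - X^2 : ℝ[X]) = (1+X) * (1-X) := by ring
  rw [pp, derivative_mul, h1]
  have e1 : ((1+X) * (1-X)) * (derivative ((1+X:ℝ[X])^m) * (1-X)^(k-m)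
      + (1+X)^m * derivative ((1-X:ℝ[X])^(k-m)))
      = (1-X) * ((1+X) * derivative ((1+X:ℝ[X])^m)) * (1-X)^(k-m)
      + (1+X) * (1+X)^m * ((1-X) * derivative ((1-X:ℝ[X])^(k-m))) := by ring
  rw [e1, dA, dB]
  have hk : ((k - m : ℕ) : ℝ) = (k:ℝ) - m := by
    push_cast [Nat.cast_sub hm]; ring
  rw [hk]
  simp only [C_add, C_neg, C_sub, C_mul, map_ofNat, C_1]
  ring

lemma coeff_eig (k m : ℕ) (hm : m ≤ k) (a : ℕ) :
    ((a:ℝ)+1) * (pp k m).coeff (a+1)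
      + (if a = 0 then 0 else ((k:ℝ) - ((a-1:ℕ):ℝ)) * (pp k m).coeff (a-1))
      = (2*(m:ℝ) - k) * (pp k m).coeff a := by
  have H := congrArg (fun q => Polynomial.coeff q a) (eig_poly k m hm)
  have h2 : (1 - X^2) * derivative (pp k m) + C (k:ℝ) * (X * pp k m)
      = derivative (pp k m) - derivative (pp k m) * X^2 + C (k:ℝ) * (pp k m * X^1) := by
    ring
  rw [h2] at H
  rw [coeff_add, coeff_sub, coeff_C_mul, coeff_C_mul, coeff_mul_X_pow', coeff_mul_X_pow',
    coeff_derivative] at H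
  rcases a with _ | _ | b
  · simp only [if_neg (by omega : ¬ 2 ≤ 0), if_neg (by omega : ¬ 1 ≤ 0)] at H
    simp only [if_pos rfl]
    push_cast at H ⊢
    linarith
  · simp only [if_neg (by omega : ¬ 2 ≤ 1), if_pos (by omega : 1 ≤ 1)] at H
    simp only [if_neg (by omega : ¬ (1:ℕ) = 0)]
    norm_num at H ⊢
    linarith
  · simp only [if_pos (by omega : 2 ≤ b+2), if_pos (by omega : 1 ≤ b+2)] at H
    simp only [if_neg (by omega : ¬ (b+2:ℕ) = 0)]
    have e1 : b + 2 - 2 = b := by omega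
    have e2 : b + 2 - 1 = b + 1 := by omega
    rw [e1, e2, coeff_derivative] at H
    rw [e2]
    push_cast at H ⊢
    linarith

lemma pp_coeff_zero (k m : ℕ) : (pp k m).coeff 0 = 1 := by
  simp [pp, Polynomial.coeff_zero_eq_eval_zero]

lemma pp_natDegree_le (k m : ℕ) (hm : m ≤ k) : (pp k m).natDegree ≤ k := by
  refine le_trans (natDegree_mul_le) ?_
  have h1 : ((1 + X : ℝ[X])^m).natDegree ≤ m := by
    refine le_trans (natDegree_pow_le) ?_
    have : (1 + X : ℝ[X]).natDegree ≤ 1 := by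
      refine le_trans (natDegree_add_le _ _) ?_
      simp
    nlinarith [this]
  have h2 : ((1 - X : ℝ[X])^(k-m)).natDegree ≤ k - m := by
    refine le_trans (natDegree_pow_le) ?_
    have : (1 - X : ℝ[X]).natDegree ≤ 1 := by
      refine le_trans (natDegree_sub_le _ _) ?_
      simp
    nlinarith [this]
  omega

lemma pp_coeff_hi (k m j : ℕ) (hm : m ≤ k) (hj : k < j) : (pp k m).coeff j = 0 :=
  Polynomial.coeff_eq_zero_of_natDegree_lt (lt_of_le_of_lt (pp_natDegree_le k m hm) hj)

/-- The Kac matrix entries as a function of natural indices. -/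
noncomputable def kacf (k a b : ℕ) : ℝ :=
  if a + 1 = b then (a:ℝ) + 1 else if b + 1 = a then (k:ℝ) - (b:ℝ) else 0

lemma sum_kacf (k m : ℕ) (hm : m ≤ k) (α : Fin (k+1)) :
    ∑ β : Fin (k+1), kacf k α β * (pp k m).coeff β
      = (2*(m:ℝ) - k) * (pp k m).coeff α := by
  set c : ℕ → ℝ := fun j => (pp k m).coeff j with hc
  have hα : (α:ℕ) < k + 1 := α.isLt
  rw [Fin.sum_univ_eq_sum_range (fun j => kacf k α j * c j) (k+1)]
  have split : ∀ j, kacf k (α:ℕ) j * c j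
      = (if j = (α:ℕ)+1 then ((α:ℕ):ℝ)+1 else 0) * c j
      + (if (j:ℕ)+1 = (α:ℕ) then (k:ℝ) - (j:ℝ) else 0) * c j := by
    intro j
    unfold kacf
    split_ifs with h1 h2 h3 h4 h5 <;> (try ring) <;> (exfalso; omega)
  simp only [split]
  rw [Finset.sum_add_distrib]
  have S1 : ∑ j ∈ Finset.range (k+1), (if j = (α:ℕ)+1 then ((α:ℕ):ℝ)+1 else 0) * c j
      = (((α:ℕ):ℝ)+1) * c ((α:ℕ)+1) := by
    simp only [ite_mul, zero_mul]
    rw [Finset.sum_ite_eq' (Finset.range (k+1)) ((α:ℕ)+1) (fun j => (((α:ℕ):ℝ)+1) * c j)]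
    split_ifs with h
    · rfl
    · have hak : (α:ℕ) = k := by simp at h; omega
      have : c ((α:ℕ)+1) = 0 := by
        rw [hc]; exact pp_coeff_hi k m _ hm (by omega)
      rw [this, mul_zero]
  have S2 : ∑ j ∈ Finset.range (k+1), (if (j:ℕ)+1 = (α:ℕ) then (k:ℝ) - (j:ℝ) else 0) * c j
      = if (α:ℕ) = 0 then 0 else ((k:ℝ) - (((α:ℕ)-1 : ℕ):ℝ)) * c ((α:ℕ)-1) := by
    rcases h0 : (α:ℕ) with _ | a
    · simp
    · have hiff : ∀ j, (j + 1 = a + 1) ↔ (j = a) := by omega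
      simp only [hiff, ite_mul, zero_mul]
      rw [Finset.sum_ite_eq' (Finset.range (k+1)) a (fun j => ((k:ℝ) - (j:ℝ)) * c j)]
      rw [if_pos (by simp; omega)]
      simp
  rw [S1, S2]
  exact coeff_eig k m hm α

/-- Square roots of binomial coefficients: the diagonal conjugation. -/
noncomputable def ee (k a : ℕ) : ℝ := Real.sqrt (k.choose a)

lemma ee_pos (k a : ℕ) (ha : a ≤ k) : 0 < ee k a := by
  have : 0 < k.choose a := Nat.choose_pos ha
  unfold ee
  positivity

lemma sqrt_helper (n1 n2 t n3 : ℕ) (h : n1 * n2 = t*t*n3) :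
    Real.sqrt n1 * Real.sqrt n2 = t * Real.sqrt n3 := by
  rw [← Real.sqrt_mul (by positivity) ((n2:ℕ):ℝ)]
  have h2 : ((n1:ℝ)*n2) = ((t:ℝ)*t)*n3 := by exact_mod_cast congrArg (Nat.cast (R := ℝ)) h
  rw [h2, Real.sqrt_mul (by positivity), Real.sqrt_mul_self (by positivity)]

lemma entry (k : ℕ) (α β : Fin (k+1)) :
    hopH k α β = (ee k α)⁻¹ * kacf k α β * ee k β := by
  have hα : (α:ℕ) ≤ k := by have := α.isLt; omega
  have hβ : (β:ℕ) ≤ k := by have := β.isLt; omega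
  have eα := ee_pos k α hα
  have eβ := ee_pos k β hβ
  unfold hopH kacf
  split_ifs with h1 h2
  · -- superdiagonal : β = α + 1
    have key : Real.sqrt ((((α:ℕ)+1) * (k - (α:ℕ)) : ℕ)) * ee k α
        = (((α:ℕ)+1 : ℕ) : ℝ) * ee k ((α:ℕ)+1) := by
      unfold ee
      apply sqrt_helper
      calc ((α:ℕ)+1) * (k - (α:ℕ)) * k.choose (α:ℕ)
          = ((α:ℕ)+1) * (k.choose (α:ℕ) * (k - (α:ℕ))) := by ring
        _ = ((α:ℕ)+1) * (k.choose ((α:ℕ)+1) * ((α:ℕ)+1)) := by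
              rw [Nat.choose_succ_right_eq]
        _ = ((α:ℕ)+1) * ((α:ℕ)+1) * k.choose ((α:ℕ)+1) := by ring
    rw [← h1]
    rw [← h1] at eβ
    rw [Nat.cast_add, Nat.cast_one] at key
    rw [mul_assoc, eq_inv_mul_iff_mul_eq₀ eα.ne']
    linear_combination key
  · -- subdiagonal : α = β + 1
    have key : Real.sqrt ((((β:ℕ)+1) * (k - (β:ℕ)) : ℕ)) * ee k ((β:ℕ)+1)
        = ((k - (β:ℕ) : ℕ) : ℝ) * ee k β := by
      unfold ee
      apply sqrt_helper
      calc ((β:ℕ)+1) * (k - (β:ℕ)) * k.choose ((β:ℕ)+1)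
          = (k - (β:ℕ)) * (k.choose ((β:ℕ)+1) * ((β:ℕ)+1)) := by ring
        _ = (k - (β:ℕ)) * (k.choose (β:ℕ) * (k - (β:ℕ))) := by
              rw [Nat.choose_succ_right_eq]
        _ = (k - (β:ℕ)) * (k - (β:ℕ)) * k.choose (β:ℕ) := by ring
    have hcast : ((k - (β:ℕ) : ℕ) : ℝ) = (k:ℝ) - ((β:ℕ):ℝ) := by
      push_cast [Nat.cast_sub hβ]; ring
    rw [hcast] at key
    rw [← h2]
    rw [← h2] at eα
    rw [mul_assoc, eq_inv_mul_iff_mul_eq₀ eα.ne']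
    linear_combination key
  · simp

lemma hopH_mulVec (k : ℕ) (m : Fin (k+1)) :
    (hopH k).mulVec (fun β : Fin (k+1) => (ee k β)⁻¹ * (pp k m).coeff β)
      = (2*((m:ℕ):ℝ) - k) • (fun β : Fin (k+1) => (ee k β)⁻¹ * (pp k m).coeff β) := by
  have hm : (m:ℕ) ≤ k := by have := m.isLt; omega
  funext α
  have hα : (α:ℕ) ≤ k := by have := α.isLt; omega
  have eα := ee_pos k α hα
  show ∑ β : Fin (k+1), hopH k α β * ((ee k β)⁻¹ * (pp k m).coeff β) = _
  have hterm : ∀ β : Fin (k+1), hopH k α β * ((ee k β)⁻¹ * (pp k m).coeff β)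
      = (ee k α)⁻¹ * (kacf k α β * (pp k m).coeff β) := by
    intro β
    have hβ : (β:ℕ) ≤ k := by have := β.isLt; omega
    have eβ := ee_pos k β hβ
    rw [entry k α β]
    field_simp
  rw [Finset.sum_congr rfl (fun β _ => hterm β), ← Finset.mul_sum,
    sum_kacf k m hm α]
  simp only [Pi.smul_apply, smul_eq_mul]
  ring


open Polynomial in
/-- The characteristic polynomial of `H_k` is `∏_{m=0}^{k} (X − (2m − k))`;
in particular the eigenvalues of `H_k` are exactly `−k, −k+2, …, k−2, k`. -/
theorem charpoly_hopH (k : ℕ) :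
    (hopH k).charpoly = ∏ m ∈ Finset.range (k+1), (X - C (2 * (m : ℝ) - (k : ℝ))) := by
  classical
  set μ : Fin (k+1) → ℝ := fun m => 2*((m:ℕ):ℝ) - k with hμdef
  set w : Fin (k+1) → (Fin (k+1) → ℝ) :=
    fun m => (fun β : Fin (k+1) => (ee k β)⁻¹ * (pp k m).coeff β) with hwdef
  set f : Module.End ℝ (Fin (k+1) → ℝ) := Matrix.toLin' (hopH k) with hfdef
  have hvec : ∀ m : Fin (k+1), f (w m) = μ m • w m := by
    intro m
    rw [hfdef, Matrix.toLin'_apply]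
    exact hopH_mulVec k m
  have hne : ∀ m : Fin (k+1), w m ≠ 0 := by
    intro m h
    have h0 := congrFun h 0
    have : ee k 0 = 1 := by unfold ee; simp
    simp only [hwdef, Pi.zero_apply, Fin.val_zero] at h0
    rw [pp_coeff_zero, this] at h0
    norm_num at h0
  have hinj : Function.Injective μ := by
    intro a b hab
    simp only [hμdef] at hab
    have : ((a:ℕ):ℝ) = ((b:ℕ):ℝ) := by linarith
    exact Fin.ext (Nat.cast_injective this)
  have hli : LinearIndependent ℝ w :=
    Module.End.eigenvectors_linearIndependent' f μ hinj w
      (fun m => ⟨Module.End.mem_eigenspace_iff.mpr (hvec m), hne m⟩)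
  have hcard : Fintype.card (Fin (k+1)) = Module.finrank ℝ (Fin (k+1) → ℝ) := by
    simp
  let b : Module.Basis (Fin (k+1)) ℝ (Fin (k+1) → ℝ) :=
    basisOfLinearIndependentOfCardEqFinrank hli hcard
  have hb : ⇑b = w := coe_basisOfLinearIndependentOfCardEqFinrank hli hcard
  have htm : LinearMap.toMatrix b b f = Matrix.diagonal μ := by
    ext i j
    rw [LinearMap.toMatrix_apply]
    have : f (b j) = μ j • b j := by rw [hb]; exact hvec j
    rw [this, LinearEquiv.map_smul, Module.Basis.repr_self]
    by_cases h : i = j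
    · subst h; simp
    · simp [Finsupp.single_apply, Ne.symm h, Matrix.diagonal_apply_ne _ h]
  have e0 : LinearMap.toMatrix (Pi.basisFun ℝ (Fin (k+1))) (Pi.basisFun ℝ (Fin (k+1))) f
      = hopH k := by
    rw [LinearMap.toMatrix_eq_toMatrix']
    exact LinearMap.toMatrix'_toLin' _
  have hdiag : (Matrix.diagonal μ).charpoly = ∏ i : Fin (k+1), (X - C (μ i)) := by
    rw [Matrix.charpoly]
    have hc : Matrix.charmatrix (Matrix.diagonal μ)
        = Matrix.diagonal (fun i => (X:ℝ[X]) - C (μ i)) := by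
      funext i j
      by_cases h : i = j
      · subst h; simp
      · simp [h]
    rw [hc, Matrix.det_diagonal]
  calc (hopH k).charpoly
      = (LinearMap.toMatrix (Pi.basisFun ℝ (Fin (k+1))) (Pi.basisFun ℝ (Fin (k+1))) f).charpoly := by
        rw [e0]
    _ = f.charpoly := LinearMap.charpoly_toMatrix f _
    _ = (LinearMap.toMatrix b b f).charpoly := (LinearMap.charpoly_toMatrix f b).symm
    _ = (Matrix.diagonal μ).charpoly := by rw [htm]
    _ = ∏ i : Fin (k+1), (X - C (μ i)) := hdiag
    _ = ∏ m ∈ Finset.range (k+1), (X - C (2 * (m : ℝ) - (k : ℝ))) := by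
        exact Fin.prod_univ_eq_prod_range (fun j => (X:ℝ[X]) - C (2 * (j : ℝ) - (k : ℝ))) (k+1)
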